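/- Let ψ_l be the F_q-algebra endomorphism of F_q[x_1,...,x_{2m}] with ψ_l(x_i) = F_{l,q}(x_i) (the additive polynomial whose roots are the span of x_1,...,x_l evaluated at x_i). Writing T = ψ_{l-1}(x_l), for l ≥ 1 one has ψ_l(Ω_{0,1}) = ψ_{l-1}(Ω_{0,1})^q - T^{q-1} ψ_{l-1}(Ω_{1,1}) + T^{2(q-1)} ψ_{l-1}(Ω_{0,1}). -/

import Mathlib

open MvPolynomial Finset

/-- The `i`-th Steenrod operation `P^i` on `F[x_1,…,x_n]`: the coefficient of `ζ^i` in the image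
of `f` under the `F`-algebra map sending each variable `x_k` to `x_k + x_k^q ζ`. -/
noncomputable def steenrod (F : Type*) [Field F] [Fintype F] (n i : ℕ)
    (f : MvPolynomial (Fin n) F) : MvPolynomial (Fin n) F :=
  ((MvPolynomial.aeval fun k : Fin n =>
      (Polynomial.C (MvPolynomial.X k) +
        Polynomial.X * Polynomial.C (MvPolynomial.X k ^ Fintype.card F) :
        Polynomial (MvPolynomial (Fin n) F))) f).coeff i

/-- `Ω_{0,1} = Σ_{i=1}^m x_{2m-i+1} x_i`. -/
noncomputable def Omega0 (F : Type*) [Field F] [Fintype F] (m : ℕ) :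
    MvPolynomial (Fin (2 * m)) F :=
  ∑ i : Fin m,
    MvPolynomial.X (⟨2 * m - 1 - i, by have := i.isLt; omega⟩ : Fin (2 * m)) *
      MvPolynomial.X (⟨i, by have := i.isLt; omega⟩ : Fin (2 * m))

/-- `Ω_{s,j} = Σ_{i=1}^m (x_{2m-i+1}^{q^s} x_i + j · x_{2m-i+1} x_i^{q^s})` for `s ≥ 1`. -/
noncomputable def Omega (F : Type*) [Field F] [Fintype F] (m s : ℕ) (j : F) :
    MvPolynomial (Fin (2 * m)) F :=
  ∑ i : Fin m,
    (MvPolynomial.X (⟨2 * m - 1 - i, by have := i.isLt; omega⟩ : Fin (2 * m)) ^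
        (Fintype.card F ^ s) *
      MvPolynomial.X (⟨i, by have := i.isLt; omega⟩ : Fin (2 * m)) +
     j • (MvPolynomial.X (⟨2 * m - 1 - i, by have := i.isLt; omega⟩ : Fin (2 * m)) *
      MvPolynomial.X (⟨i, by have := i.isLt; omega⟩ : Fin (2 * m)) ^ (Fintype.card F ^ s)))

/-- The `F`-algebra endomorphism `ψ_l` of `F[x_1,…,x_n]` sending each variable `x_i` to
`F_{l,q}(x_i) = ∏_{u ∈ span(x_1,…,x_l)} (x_i - u)`. -/
noncomputable def psi (F : Type*) [Field F] [Fintype F] (n l : ℕ) (h : l ≤ n) :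
    MvPolynomial (Fin n) F →ₐ[F] MvPolynomial (Fin n) F :=
  MvPolynomial.aeval fun i =>
    ∏ c : Fin l → F, (MvPolynomial.X i - ∑ j, c j • MvPolynomial.X (Fin.castLE h j))

section AuxLemmas
variable {F : Type*} [Field F] [Fintype F]

open Polynomial in
lemma aux_prod_X_sub_C :
    ∏ a : F, (Polynomial.X - Polynomial.C a) = Polynomial.X ^ Fintype.card F - Polynomial.X := by
  have hdeg : (Polynomial.X ^ Fintype.card F - Polynomial.X : F[X]).natDegree = Fintype.card F :=
    FiniteField.X_pow_card_sub_X_natDegree_eq F Fintype.one_lt_card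
  have hm : (Polynomial.X ^ Fintype.card F - Polynomial.X : F[X]).Monic := by
    have hlt : degree (Polynomial.X : F[X]) < degree (Polynomial.X ^ Fintype.card F : F[X]) := by
      rw [degree_X, degree_X_pow]; exact_mod_cast Fintype.one_lt_card
    exact (monic_X_pow _).sub_of_left hlt
  have hroots := FiniteField.roots_X_pow_card_sub_X F
  have key := prod_multiset_X_sub_C_of_monic_of_roots_card_eq hm
    (by rw [hroots, hdeg]; simp [Finset.card_univ])
  rw [hroots] at key
  rw [Finset.prod_eq_multiset_prod]
  exact key

lemma aux_prod_sub_alg {A : Type*} [CommRing A] [Algebra F A] (z : A) :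
    ∏ a : F, (z - algebraMap F A a) = z ^ Fintype.card F - z := by
  have := congrArg (Polynomial.aeval z) (aux_prod_X_sub_C (F := F))
  simpa using this

lemma prod_sub_smul_univ :
    ∏ a : F, ((X 0 : MvPolynomial (Fin 2) F) - a • X 1)
      = X 0 ^ Fintype.card F - X 1 ^ (Fintype.card F - 1) * X 0 := by
  set q := Fintype.card F with hq
  let R0 := MvPolynomial (Fin 2) F
  let K := FractionRing R0
  have hinj : Function.Injective (algebraMap R0 K) := IsFractionRing.injective R0 K
  apply hinj
  set φ := algebraMap R0 K
  have ht0 : φ (X 1) ≠ 0 := by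
    rw [map_ne_zero_iff φ hinj]; exact MvPolynomial.X_ne_zero 1
  set t0 := φ (X 1)
  set y0 := φ (X 0)
  set z := y0 * t0⁻¹ with hzdef
  have hz : t0 * z = y0 := by
    rw [hzdef, mul_comm y0, ← mul_assoc, mul_inv_cancel₀ ht0, one_mul]
  have base := aux_prod_sub_alg (F := F) (A := K) z
  have hsmul : ∀ a : F, φ ((a : F) • (X 1 : R0)) = algebraMap F K a * t0 := by
    intro a
    rw [IsScalarTower.algebraMap_apply F R0 K a, MvPolynomial.smul_eq_C_mul, map_mul,
      MvPolynomial.algebraMap_eq]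
  calc φ (∏ a : F, ((X 0 : R0) - a • X 1))
      = ∏ a : F, (y0 - algebraMap F K a * t0) := by
        rw [map_prod]; exact Finset.prod_congr rfl fun a _ => by rw [map_sub, hsmul]
    _ = ∏ a : F, (t0 * (z - algebraMap F K a)) := by
        refine Finset.prod_congr rfl fun a _ => ?_
        rw [mul_sub, hz]; ring
    _ = t0 ^ q * (z ^ q - z) := by
        rw [Finset.prod_mul_distrib, Finset.prod_const, Finset.card_univ, base, hq]
    _ = y0 ^ q - t0 ^ (q - 1) * y0 := by
        have hq1 : 1 ≤ q := Fintype.card_pos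
        have h1 : t0 ^ q = t0 ^ (q - 1) * t0 := by
          rw [← pow_succ]; congr 1; omega
        rw [hzdef, mul_sub, ← mul_pow, mul_comm t0, mul_assoc, inv_mul_cancel₀ ht0, mul_one,
          h1, mul_comm (t0 ^ (q - 1)) t0, mul_assoc, mul_comm t0, mul_assoc, mul_assoc y0,
          inv_mul_cancel₀ ht0, mul_one]
    _ = φ (X 0 ^ q - X 1 ^ (q - 1) * X 0) := by
        rw [map_sub, map_mul, map_pow, map_pow]

lemma prod_sub_smul {A : Type*} [CommRing A] [Algebra F A] (y t : A) :
    ∏ a : F, (y - a • t) = y ^ Fintype.card F - t ^ (Fintype.card F - 1) * y := by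
  have := congrArg (aeval (R := F) ![y, t]) (prod_sub_smul_univ (F := F))
  simpa [map_prod, Algebra.smul_def] using this

noncomputable def Pfun (F : Type*) [Field F] [Fintype F] (n l : ℕ) (hl : l ≤ n)
    (y : MvPolynomial (Fin n) F) : MvPolynomial (Fin n) F :=
  ∏ c : Fin l → F, (y - ∑ j, c j • X (Fin.castLE hl j))

lemma Pfun_zero (n : ℕ) (hl : 0 ≤ n) (y : MvPolynomial (Fin n) F) : Pfun F n 0 hl y = y := by
  simp [Pfun]

lemma Pfun_succ (n l : ℕ) (hl : l + 1 ≤ n) (y : MvPolynomial (Fin n) F) :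
    Pfun F n (l + 1) hl y
      = ∏ a : F, Pfun F n l (by omega) (y - a • X (⟨l, by omega⟩ : Fin n)) := by
  rw [Pfun, ← (Fin.snocEquiv (fun _ : Fin (l+1) => F)).prod_comp, Fintype.prod_prod_type]
  refine Finset.prod_congr rfl fun a _ => ?_
  rw [Pfun]
  refine Finset.prod_congr rfl fun c _ => ?_
  have hcast : ∀ j : Fin l, Fin.castLE hl j.castSucc = Fin.castLE (by omega : l ≤ n) j :=
    fun j => rfl
  have hlast : Fin.castLE hl (Fin.last l) = (⟨l, by omega⟩ : Fin n) := rfl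
  rw [Fin.sum_univ_castSucc]
  simp only [Fin.snocEquiv_apply, Fin.snoc_castSucc, Fin.snoc_last, hcast, hlast]
  ring

lemma Pfun_add_smul (n : ℕ) : ∀ (l : ℕ) (hl : l ≤ n),
    (∀ y z : MvPolynomial (Fin n) F,
      Pfun F n l hl (y + z) = Pfun F n l hl y + Pfun F n l hl z)
    ∧ (∀ (a : F) (y : MvPolynomial (Fin n) F),
      Pfun F n l hl (a • y) = a • Pfun F n l hl y) := by
  intro l
  induction l with
  | zero => intro hl; exact ⟨fun y z => by simp [Pfun_zero], fun a y => by simp [Pfun_zero]⟩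
  | succ l ih =>
    intro hl
    have hl' : l ≤ n := by omega
    obtain ⟨ihadd, ihsmul⟩ := ih hl'
    have hsub : ∀ (a : F) (y z : MvPolynomial (Fin n) F), Pfun F n l hl' (y - a • z)
        = Pfun F n l hl' y - a • Pfun F n l hl' z := by
      intro a y z
      rw [sub_eq_add_neg, ← neg_smul, ihadd, ihsmul, neg_smul, ← sub_eq_add_neg]
    have hrec : ∀ y, Pfun F n (l + 1) hl y
        = Pfun F n l hl' y ^ Fintype.card F
          - Pfun F n l hl' (X ⟨l, by omega⟩) ^ (Fintype.card F - 1) * Pfun F n l hl' y := by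
      intro y
      rw [Pfun_succ, Finset.prod_congr rfl fun a _ => hsub a y (X ⟨l, by omega⟩)]
      exact prod_sub_smul _ _
    haveI : Fact (ringChar F).Prime := ⟨CharP.char_is_prime F (ringChar F)⟩
    obtain ⟨k, hp, hqpk⟩ := FiniteField.card F (ringChar F)
    have hfrob : ∀ u v : MvPolynomial (Fin n) F,
        (u + v) ^ Fintype.card F = u ^ Fintype.card F + v ^ Fintype.card F := by
      intro u v
      rw [hqpk]
      exact add_pow_char_pow u v (ringChar F) k
    refine ⟨fun y z => ?_, fun a y => ?_⟩
    · rw [hrec, hrec, hrec, ihadd, hfrob]; ring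
    · rw [hrec, hrec, ihsmul, _root_.smul_pow, FiniteField.pow_card a, smul_sub, mul_smul_comm]

lemma Pfun_rec (n l : ℕ) (hl : l + 1 ≤ n) (y : MvPolynomial (Fin n) F) :
    Pfun F n (l + 1) hl y
      = Pfun F n l (by omega) y ^ Fintype.card F
        - Pfun F n l (by omega) (X ⟨l, by omega⟩) ^ (Fintype.card F - 1)
          * Pfun F n l (by omega) y := by
  have hl' : l ≤ n := by omega
  obtain ⟨ihadd, ihsmul⟩ := Pfun_add_smul (F := F) n l hl'
  have hsub : ∀ (a : F) (y z : MvPolynomial (Fin n) F), Pfun F n l hl' (y - a • z)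
      = Pfun F n l hl' y - a • Pfun F n l hl' z := by
    intro a y z
    rw [sub_eq_add_neg, ← neg_smul, ihadd, ihsmul, neg_smul, ← sub_eq_add_neg]
  rw [Pfun_succ, Finset.prod_congr rfl fun a _ => hsub a y (X ⟨l, by omega⟩)]
  exact prod_sub_smul _ _

end AuxLemmas

lemma psi_X {F : Type*} [Field F] [Fintype F] (n l : ℕ) (h : l ≤ n) (i : Fin n) :
    psi F n l h (MvPolynomial.X i) = Pfun F n l h (MvPolynomial.X i) := by
  rw [psi, MvPolynomial.aeval_X]; rfl

theorem stmt_16 (F : Type*) [Field F] [Fintype F] (m l q : ℕ) (hq : q = Fintype.card F)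
    (h : l + 1 ≤ 2 * m) :
    psi F (2 * m) (l + 1) h (Omega0 F m)
      = (psi F (2 * m) l (by omega) (Omega0 F m)) ^ q
        - (psi F (2 * m) l (by omega) (X ⟨l, by omega⟩)) ^ (q - 1)
          * psi F (2 * m) l (by omega) (Omega F m 1 1)
        + (psi F (2 * m) l (by omega) (X ⟨l, by omega⟩)) ^ (2 * (q - 1))
          * psi F (2 * m) l (by omega) (Omega0 F m) := by
  subst hq
  simp only [Omega0, Omega, map_sum, map_mul, map_pow, map_add, map_smul, one_smul, pow_one,
    psi_X, Pfun_rec]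
  haveI : Fact (ringChar F).Prime := ⟨CharP.char_is_prime F (ringChar F)⟩
  obtain ⟨k, hp, hqpk⟩ := FiniteField.card F (ringChar F)
  have hsumpow : ∀ (f : Fin m → MvPolynomial (Fin (2 * m)) F),
      (∑ x, f x) ^ Fintype.card F = ∑ x, f x ^ Fintype.card F := by
    intro f; rw [hqpk]; exact sum_pow_char_pow ..
  rw [hsumpow, Finset.mul_sum, Finset.mul_sum, ← Finset.sum_sub_distrib,
    ← Finset.sum_add_distrib]
  refine Finset.sum_congr rfl fun x _ => ?_
  rw [show 2 * (Fintype.card F - 1) = (Fintype.card F - 1) * 2 by ring, pow_mul]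
  ring
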